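/- Let k be a field of characteristic 2 and suppose p ∈ k is a nonzero square, say p = c² with c ∈ k nonzero. Then Inn_{L_p} is isomorphic to Inn_B where B is the 2×2 matrix with rows (1, 1/c) and (0, 1) (explicitly, the matrix with rows (1,0),(c,1) conjugates L_p to c·B), and the fixed-point group H^p = {X ∈ SL(2,k) : L_p·X·L_p⁻¹ = X} is isomorphic as a group to the additive group (k, +), realized by the strictly upper-triangular unipotent subgroup {matrices with rows (1, x), (0, 1) : x ∈ k}. -/

import Mathlib

/-- Let k be a field of characteristic 2 and p = c² with c ≠ 0.
Then Inn_{L_p} is isomorphic to Inn_B with B = !![1, 1/c; 0, 1] (explicitly,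
M = !![1,0;c,1] conjugates L_p to c·B); the fixed-point group of Inn_B in
SL(2,k) is the strictly upper-triangular unipotent subgroup
{!![1,x;0,1] : x ∈ k}; and the fixed-point group
H^p = {X ∈ SL(2,k) : L_p·X·L_p⁻¹ = X} is isomorphic as a group to (k,+). -/
theorem stmt_9 {k : Type*} [Field k] [CharP k 2] (c : k) (hc : c ≠ 0) (p : k)
    (hp : p = c ^ 2) :
    (!![(1 : k), 0; c, 1] * !![(0 : k), 1; p, 0] * (!![(1 : k), 0; c, 1])⁻¹ =
        c • !![(1 : k), 1 / c; 0, 1]) ∧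
    (∃ C : (Matrix (Fin 2) (Fin 2) k)ˣ, ∀ X : Matrix (Fin 2) (Fin 2) k, X.det = 1 →
        (C : Matrix (Fin 2) (Fin 2) k) *
          (!![(0 : k), 1; p, 0] *
            ((↑C⁻¹ : Matrix (Fin 2) (Fin 2) k) * X * (C : Matrix (Fin 2) (Fin 2) k)) *
            (!![(0 : k), 1; p, 0])⁻¹) *
          (↑C⁻¹ : Matrix (Fin 2) (Fin 2) k) =
        !![(1 : k), 1 / c; 0, 1] * X * (!![(1 : k), 1 / c; 0, 1])⁻¹) ∧
    ({X : Matrix (Fin 2) (Fin 2) k | X.det = 1 ∧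
        !![(1 : k), 1 / c; 0, 1] * X * (!![(1 : k), 1 / c; 0, 1])⁻¹ = X} =
      {X : Matrix (Fin 2) (Fin 2) k | ∃ x : k, X = !![1, x; 0, 1]}) ∧
    (∃ f : k → Matrix (Fin 2) (Fin 2) k,
      Set.BijOn f Set.univ
        {X : Matrix (Fin 2) (Fin 2) k | X.det = 1 ∧
          !![(0 : k), 1; p, 0] * X * (!![(0 : k), 1; p, 0])⁻¹ = X} ∧
      ∀ x y : k, f (x + y) = f x * f y) := by
  have h2 : (2 : k) = 0 := by exact_mod_cast CharP.cast_eq_zero k 2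
  have hp0 : p ≠ 0 := by rw [hp]; exact pow_ne_zero 2 hc
  have hM2 : !![(1 : k), 0; c, 1] * !![(1 : k), 0; c, 1] = 1 := by
    ext i j; fin_cases i <;> fin_cases j <;>
      simp [Matrix.mul_fin_two] <;> linear_combination c * h2
  have hMinv : (!![(1 : k), 0; c, 1])⁻¹ = !![(1 : k), 0; c, 1] :=
    Matrix.inv_eq_right_inv hM2
  have hB2 : !![(1 : k), 1 / c; 0, 1] * !![(1 : k), 1 / c; 0, 1] = 1 := by
    ext i j; fin_cases i <;> fin_cases j <;>
      simp [Matrix.mul_fin_two] <;> linear_combination (1 / c) * h2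
  have hBinv : (!![(1 : k), 1 / c; 0, 1])⁻¹ = !![(1 : k), 1 / c; 0, 1] :=
    Matrix.inv_eq_right_inv hB2
  have hLinv : (!![(0 : k), 1; p, 0])⁻¹ = (1 / p) • !![(0 : k), 1; p, 0] := by
    apply Matrix.inv_eq_right_inv
    ext i j; fin_cases i <;> fin_cases j <;>
      simp [Matrix.mul_fin_two, Matrix.smul_apply] <;> field_simp
  have part1 : !![(1 : k), 0; c, 1] * !![(0 : k), 1; p, 0] * (!![(1 : k), 0; c, 1])⁻¹ =
      c • !![(1 : k), 1 / c; 0, 1] := by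
    rw [hMinv]
    ext i j; fin_cases i <;> fin_cases j <;>
      simp [Matrix.mul_fin_two, Matrix.smul_apply] <;>
      first
        | (field_simp; done)
        | linear_combination hp + (c ^ 2) * h2
        | linear_combination hp
        | linear_combination (c ^ 2) * h2
  refine ⟨part1, ?_, ?_, ?_⟩
  · -- part 2
    refine ⟨⟨!![(1 : k), 0; c, 1], !![(1 : k), 0; c, 1], hM2, hM2⟩, fun X _ => ?_⟩
    simp only [Units.inv_mk, Units.val_mk]
    have key : !![(1 : k), 0; c, 1] *
        (!![(0 : k), 1; p, 0] * (!![(1 : k), 0; c, 1] * X * !![(1 : k), 0; c, 1]) *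
          (!![(0 : k), 1; p, 0])⁻¹) * !![(1 : k), 0; c, 1] =
        (!![(1 : k), 0; c, 1] * !![(0 : k), 1; p, 0] * !![(1 : k), 0; c, 1]) * X *
          (!![(1 : k), 0; c, 1] * (!![(0 : k), 1; p, 0])⁻¹ * !![(1 : k), 0; c, 1]) := by
      simp only [mul_assoc]
    have e1 : !![(1 : k), 0; c, 1] * !![(0 : k), 1; p, 0] * !![(1 : k), 0; c, 1] =
        c • !![(1 : k), 1 / c; 0, 1] := by rw [← part1, hMinv]
    have e2 : !![(1 : k), 0; c, 1] * (!![(0 : k), 1; p, 0])⁻¹ * !![(1 : k), 0; c, 1] =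
        (1 / c) • !![(1 : k), 1 / c; 0, 1] := by
      rw [hLinv, Matrix.mul_smul, Matrix.smul_mul, e1, smul_smul]
      rw [hp]; congr 1; field_simp
    rw [key, e1, e2, hBinv, Matrix.smul_mul, Matrix.mul_smul, Matrix.smul_mul, smul_smul,
      one_div, inv_mul_cancel₀ hc, one_smul]
  · -- part 3
    ext X
    simp only [Set.mem_setOf_eq]
    constructor
    · rintro ⟨hdet, hfix⟩
      rw [hBinv] at hfix
      refine ⟨X 0 1, ?_⟩
      rw [Matrix.eta_fin_two X] at hfix
      rw [Matrix.det_fin_two] at hdet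
      rw [Matrix.mul_fin_two, Matrix.mul_fin_two] at hfix
      have h00 := congrFun (congrFun hfix 0) 0
      have h01 := congrFun (congrFun hfix 0) 1
      simp at h00 h01
      have hc' : X 1 0 = 0 := h00.resolve_left hc
      have he : X 1 1 = X 0 0 := by
        rw [hc'] at h01
        field_simp at h01
        exact mul_left_cancel₀ hc (by linear_combination h01 - c * X 0 0 * h2)
      have ha : X 0 0 = 1 := by
        rw [hc', he] at hdet
        simp at hdet
        rcases mul_self_eq_one_iff.mp hdet with h | h
        · exact h
        · rw [h]; linear_combination -h2
      conv_lhs => rw [Matrix.eta_fin_two X]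
      rw [hc', he, ha]
    · rintro ⟨x, rfl⟩
      refine ⟨by simp [Matrix.det_fin_two_of], ?_⟩
      rw [hBinv]
      ext i j; fin_cases i <;> fin_cases j <;>
        simp [Matrix.mul_fin_two] <;> linear_combination (1 / c) * h2
  · -- part 4
    refine ⟨fun x => !![1 + c * x, x; c ^ 2 * x, 1 + c * x], ⟨?_, ?_, ?_⟩, ?_⟩
    · rintro x -
      constructor
      · rw [Matrix.det_fin_two_of]
        linear_combination (c * x) * h2
      · rw [hLinv]
        ext i j; fin_cases i <;> fin_cases j <;>
          simp [Matrix.smul_apply, Matrix.mul_apply,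
            Fin.sum_univ_two, hp] <;> field_simp <;> ring
    · rintro x - y - hxy
      have := congrFun (congrFun hxy 0) 1
      simpa using this
    · rintro X ⟨hdet, hfix⟩
      refine ⟨X 0 1, Set.mem_univ _, ?_⟩
      rw [hLinv] at hfix
      rw [Matrix.mul_smul] at hfix
      have hLXL : !![(0 : k), 1; p, 0] * X * !![(0 : k), 1; p, 0] = p • X := by
        conv_rhs => rw [← hfix]
        rw [smul_smul, mul_one_div, div_self hp0, one_smul]
      rw [Matrix.eta_fin_two X] at hLXL
      rw [Matrix.mul_fin_two, Matrix.mul_fin_two] at hLXL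
      rw [Matrix.det_fin_two] at hdet
      have h00 := congrFun (congrFun hLXL 0) 0
      have h01 := congrFun (congrFun hLXL 0) 1
      simp [Matrix.smul_apply] at h00 h01
      have he : X 1 1 = X 0 0 :=
        mul_left_cancel₀ hp0 (by linear_combination h00)
      have hc' : X 1 0 = p * X 0 1 := h01
      have ha : X 0 0 = 1 + c * X 0 1 := by
        rw [he, hc', hp] at hdet
        have key : (X 0 0 + c * X 0 1) * (X 0 0 + c * X 0 1) = 1 := by
          linear_combination hdet + (X 0 0 * c * X 0 1 + c ^ 2 * (X 0 1) ^ 2) * h2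
        rcases mul_self_eq_one_iff.mp key with h | h
        · linear_combination h - (c * X 0 1) * h2
        · linear_combination h - (c * X 0 1 + 1) * h2
      conv_rhs => rw [Matrix.eta_fin_two X]
      rw [he, hc', ha, hp]
    · intro x y
      ext i j; fin_cases i <;> fin_cases j <;>
        simp [Matrix.mul_fin_two] <;>
        first
          | linear_combination (-(c ^ 2 * x * y)) * h2
          | linear_combination (-(c * x * y)) * h2
          | linear_combination (-(c ^ 3 * x * y)) * h2
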